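/- Assume K ≠ 0. Then the function f attains a positive maximum λ1 at some unit vector e1, and there exists an orthonormal basis {e1, e2, …, en} of V such that K(e1, ei) = λi·ei for i = 1, …, n (with λ1 = f(e1)). Moreover, for every i ≥ 2 the eigenvalue λi satisfies (λ1 − 2λi)(ε − λ1λi + λi²) = 0; and for i ≥ 2, if λ1 = 2λi then f(ei) = 0, while if λ1 ≠ 2λi then λ1² − 4ε > 0 and λi = (1/2)(λ1 − √(λ1² − 4ε)). -/

import Mathlib

open scoped RealInnerProductSpace
open Module Submodule

noncomputable section

variable {V : Type*} [NormedAddCommGroup V] [InnerProductSpace ℝ V]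

/-- The curvature-type operator built from `ε` and the difference tensor `K`:
`R(X,Y)Z = ε(⟨Y,Z⟩X − ⟨X,Z⟩Y) − K(X,K(Y,Z)) + K(Y,K(X,Z))`. -/
def Rc (ε : ℝ) (K : V →ₗ[ℝ] V →ₗ[ℝ] V) (X Y Z : V) : V :=
  ε • (⟪Y, Z⟫ • X - ⟪X, Z⟫ • Y) - K X (K Y Z) + K Y (K X Z)


lemma aux_b_nonpos (lam1 a b mu : ℝ) (h0 : 0 ≤ lam1)
    (key : ∀ c s : ℝ, c^2 + s^2 = 1 →
      c^3*lam1 + 3*c^2*s*b + 3*c*s^2*a + s^3*mu ≤ lam1) :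
    b ≤ 0 := by
  by_contra hb
  push_neg at hb
  obtain ⟨C, hC⟩ : ∃ C:ℝ, C = 3*lam1 + 3*(|a|) + (|mu|) + 1 := ⟨_, rfl⟩
  have hCpos : 0 < C := by rw [hC]; positivity
  obtain ⟨s, hs⟩ : ∃ s:ℝ, s = min (1/2) (b/C) := ⟨_, rfl⟩
  have hs0 : 0 < s := hs ▸ lt_min (by norm_num) (div_pos hb hCpos)
  have hs2 : s ≤ 1/2 := hs ▸ min_le_left _ _
  have hsb : s ≤ b / C := hs ▸ min_le_right _ _
  have hs1 : s ≤ 1 := by linarith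
  have hss : s^2 ≤ 1/4 := by
    rw [sq]; exact le_trans (mul_le_mul hs2 hs2 hs0.le (by norm_num)) (by norm_num)
  obtain ⟨c, hc⟩ : ∃ c:ℝ, c = Real.sqrt (1 - s^2) := ⟨_, rfl⟩
  have hc0 : 0 ≤ c := hc ▸ Real.sqrt_nonneg _
  have hc2 : c^2 = 1 - s^2 := hc ▸ Real.sq_sqrt (by linarith)
  have hc1 : c ≤ 1 := by linarith [sq_nonneg (1-c), sq_nonneg s]
  have hc34 : 3/4 ≤ c^2 := by linarith
  have hk := key c s (by rw [hc2]; ring)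
  have t1 : 0 ≤ ((|a|) + a) * (c * s^2) :=
    mul_nonneg (by linarith [neg_le_abs a]) (mul_nonneg hc0 (sq_nonneg s))
  have t2 : 0 ≤ (1 - c) * (s^2 * (|a|)) :=
    mul_nonneg (by linarith) (mul_nonneg (sq_nonneg s) (abs_nonneg a))
  have e1 : -(3*c*s^2*a) ≤ 3*s^2*(|a|) := by linarith [t1, t2]
  have t3 : 0 ≤ ((|mu|) + mu) * s^3 :=
    mul_nonneg (by linarith [neg_le_abs mu]) (by positivity)
  have t4 : 0 ≤ (1 - s) * (s^2 * (|mu|)) :=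
    mul_nonneg (by linarith) (mul_nonneg (sq_nonneg s) (abs_nonneg mu))
  have e2 : -(s^3*mu) ≤ s^2*(|mu|) := by linarith [t3, t4]
  have hcube : lam1 - c^3*lam1 ≤ 3*lam1*s^2 := by
    have h := mul_nonneg h0 (mul_nonneg (by linarith : (0:ℝ) ≤ 1-c)
      (by linarith [sq_nonneg s] : (0:ℝ) ≤ 2+2*c-c^2))
    have h2 : lam1*(c^2) = lam1*(1-s^2) := by rw [hc2]
    nlinarith [h, h2]
  have hmain : 3*c^2*s*b ≤ 3*lam1*s^2 + 3*s^2*(|a|) + s^2*(|mu|) := by linarith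
  have hbs : 0 < s*b := mul_pos hs0 hb
  have h94 : (9/4)*(s*b) ≤ 3*c^2*s*b := by
    linarith [mul_nonneg (by linarith : (0:ℝ) ≤ c^2 - 3/4) hbs.le]
  have hCs : s*C ≤ b := (le_div_iff₀ hCpos).mp hsb
  have hCs2 : C*s^2 ≤ b*s := by
    calc C*s^2 = (s*C)*s := by ring
    _ ≤ b*s := mul_le_mul_of_nonneg_right hCs hs0.le
  have hexp : 3*lam1*s^2 + 3*s^2*(|a|) + s^2*(|mu|) = C*s^2 - s^2 := by rw [hC]; ring
  linarith [sq_nonneg s]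


lemma aux_a_le (lam1 a mu : ℝ) (h0 : 0 ≤ lam1)
    (key : ∀ c s : ℝ, c^2 + s^2 = 1 →
      c^3*lam1 + 3*c*s^2*a + s^3*mu ≤ lam1) :
    a ≤ lam1/2 := by
  have hIco : ∀ c ∈ Set.Ico (0:ℝ) 1, 0 ≤ lam1*(1+c+c^2) - 3*c*(1+c)*a := by
    intro c hc
    obtain ⟨hc0, hc1⟩ := hc
    obtain ⟨s, hs⟩ : ∃ s:ℝ, s = Real.sqrt (1 - c^2) := ⟨_, rfl⟩
    have hcc : c^2 ≤ 1 := by nlinarith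
    have hs2 : s^2 = 1 - c^2 := hs ▸ Real.sq_sqrt (by linarith)
    have h1 := key c s (by linarith)
    have h2 := key c (-s) (by rw [neg_pow]; push_cast; linarith [hs2])
    have he : 3*c*s^2*a = 3*c*(1-c^2)*a := by rw [hs2]
    by_contra hneg
    push_neg at hneg
    have h1c : 0 < 1 - c := by linarith
    nlinarith [h1, h2, he, mul_pos h1c (neg_pos.mpr hneg)]
  have hcl : IsClosed {c : ℝ | 0 ≤ lam1*(1+c+c^2) - 3*c*(1+c)*a} :=
    isClosed_le continuous_const (by fun_prop)
  have hsub : closure (Set.Ico (0:ℝ) 1) ⊆ {c : ℝ | 0 ≤ lam1*(1+c+c^2) - 3*c*(1+c)*a} :=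
    hcl.closure_subset_iff.mpr hIco
  have h1m : (1:ℝ) ∈ closure (Set.Ico (0:ℝ) 1) := by
    rw [closure_Ico (by norm_num : (0:ℝ) ≠ 1)]
    exact ⟨by norm_num, le_refl 1⟩
  have := hsub h1m
  simp only [Set.mem_setOf_eq] at this
  linarith

lemma aux_mu_nonpos (lam1 mu : ℝ) (h0 : 0 < lam1)
    (key : ∀ c s : ℝ, c^2 + s^2 = 1 →
      c^3*lam1 + 3*c*s^2*(lam1/2) + s^3*mu ≤ lam1) :
    mu ≤ 0 := by
  by_contra hmu
  push_neg at hmu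
  obtain ⟨s, hs⟩ : ∃ s:ℝ, s = min 1 (mu/(2*lam1)) := ⟨_, rfl⟩
  have hs0 : 0 < s := hs ▸ lt_min one_pos (div_pos hmu (by linarith))
  have hs1 : s ≤ 1 := hs ▸ min_le_left _ _
  have hsm : s ≤ mu/(2*lam1) := hs ▸ min_le_right _ _
  have hss : s^2 ≤ 1 := by nlinarith
  obtain ⟨c, hc⟩ : ∃ c:ℝ, c = Real.sqrt (1 - s^2) := ⟨_, rfl⟩
  have hc0 : 0 ≤ c := hc ▸ Real.sqrt_nonneg _
  have hc2 : c^2 = 1 - s^2 := hc ▸ Real.sq_sqrt (by linarith)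
  have hX0 : 0 ≤ c*(1+s^2/2) := by positivity
  have hs4 : s^4 ≤ 1 := by nlinarith [hss, sq_nonneg s]
  have hq : 1 - s^4 ≤ c*(1+s^2/2) := by
    rcases le_or_gt (1 - s^4) 0 with h | h
    · linarith
    · have hid : (c*(1+s^2/2))^2 = (1-s^2)*(1+s^2/2)^2 := by
        rw [mul_pow, hc2]
      have h1 : 0 ≤ s^4*(1-s^2) := mul_nonneg (by positivity) (by linarith)
      have h2 : 0 ≤ s^4*(1-s^4) := mul_nonneg (by positivity) (by linarith)
      have hsq : (1-s^4)^2 ≤ (c*(1+s^2/2))^2 := by nlinarith [hid, h1, h2]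
      nlinarith [hsq, (by linarith : (0:ℝ) < c*(1+s^2/2) + (1-s^4))]
  have hk := key c s (by linarith [hc2])
  have he2 : c^3*lam1 + 3*c*s^2*(lam1/2) = lam1*(c*(1+s^2/2)) := by
    linear_combination (lam1*c)*hc2
  have h5 := mul_le_mul_of_nonneg_left (by linarith [hq] : 1 - c*(1+s^2/2) ≤ s^4) h0.le
  have hmain : s^3*mu ≤ lam1*s^4 := by nlinarith [hk, he2, h5]
  have hdiv : mu ≤ lam1*s := by
    have h6 : s^3*mu ≤ s^3*(lam1*s) := by nlinarith [hmain]
    exact le_of_mul_le_mul_left h6 (by positivity)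
  have : lam1*s ≤ mu/2 := by
    have h7 := mul_le_mul_of_nonneg_left hsm h0.le
    calc lam1*s ≤ lam1*(mu/(2*lam1)) := h7
    _ = mu/2 := by field_simp
  linarith





lemma aux_K_zero (K : V →ₗ[ℝ] V →ₗ[ℝ] V)
    (hKsymm : ∀ X Y : V, K X Y = K Y X)
    (hKcub : ∀ X Y Z : V, ⟪K X Y, Z⟫ = ⟪K X Z, Y⟫)
    (hz : ∀ x : V, ⟪K x x, x⟫ = 0) : K = 0 := by
  have h1 : ∀ x y : V, ⟪K x y, y⟫ = 0 := by
    intro x y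
    have hxy := hz (x+y)
    have hxmy := hz (x-y)
    simp only [map_add, map_sub, LinearMap.add_apply, LinearMap.sub_apply,
      inner_add_left, inner_add_right, inner_sub_left, inner_sub_right] at hxy hxmy
    have c1 : ⟪K x y, x⟫ = ⟪K x x, y⟫ := hKcub x y x
    have c2 : ⟪K y x, x⟫ = ⟪K x y, x⟫ := by rw [hKsymm y x]
    have c3 : ⟪K y x, y⟫ = ⟪K x y, y⟫ := by rw [hKsymm y x]
    have c4 : ⟪K y y, x⟫ = ⟪K y x, y⟫ := hKcub y y x
    have hx := hz x
    have hy := hz y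
    linarith
  have h2 : ∀ y : V, K y y = 0 := by
    intro y
    have : ⟪K y y, K y y⟫ = 0 := by
      have := hKcub y y (K y y)
      rw [this, hKsymm y (K y y), h1 (K y y) y]
    exact inner_self_eq_zero.mp this
  ext x y
  have hxy := h2 (x+y)
  simp only [map_add, LinearMap.add_apply, h2 x, h2 y, zero_add, add_zero] at hxy
  rw [hKsymm y x] at hxy
  have h2' : (2:ℝ) • K x y = 0 := by rw [two_smul]; exact hxy
  exact (smul_eq_zero.mp h2').resolve_left (by norm_num)

lemma aux_norm_one (e1 v : V) (he1 : ‖e1‖ = 1) (hv : ‖v‖ = 1) (ho : ⟪e1, v⟫ = 0)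
    (c s : ℝ) (hcs : c^2 + s^2 = 1) : ‖c • e1 + s • v‖ = 1 := by
  have h1 : ⟪e1, e1⟫ = 1 := by
    rw [real_inner_self_eq_norm_mul_norm, he1]; norm_num
  have h2 : ⟪v, v⟫ = 1 := by
    rw [real_inner_self_eq_norm_mul_norm, hv]; norm_num
  have ho' : ⟪v, e1⟫ = 0 := by rw [real_inner_comm]; exact ho
  have hu : ⟪c • e1 + s • v, c • e1 + s • v⟫ = 1 := by
    simp only [inner_add_left, inner_add_right, real_inner_smul_left, real_inner_smul_right,
      h1, h2, ho, ho']
    nlinarith [hcs]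
  have := real_inner_self_eq_norm_mul_norm (c • e1 + s • v)
  nlinarith [norm_nonneg (c • e1 + s • v), this, hu]

lemma aux_expand (K : V →ₗ[ℝ] V →ₗ[ℝ] V)
    (hKsymm : ∀ X Y : V, K X Y = K Y X)
    (hKcub : ∀ X Y Z : V, ⟪K X Y, Z⟫ = ⟪K X Z, Y⟫)
    (e1 v : V) (c s : ℝ) :
    ⟪K (c • e1 + s • v) (c • e1 + s • v), c • e1 + s • v⟫ =
      c^3*⟪K e1 e1, e1⟫ + 3*c^2*s*⟪K e1 e1, v⟫ + 3*c*s^2*⟪K e1 v, v⟫ + s^3*⟪K v v, v⟫ := by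
  have d1 : ⟪K e1 v, e1⟫ = ⟪K e1 e1, v⟫ := hKcub e1 v e1
  have d2 : ⟪K v e1, e1⟫ = ⟪K e1 v, e1⟫ := by rw [hKsymm v e1]
  have d3 : ⟪K v e1, v⟫ = ⟪K e1 v, v⟫ := by rw [hKsymm v e1]
  have d4 : ⟪K v v, e1⟫ = ⟪K v e1, v⟫ := hKcub v v e1
  simp only [map_add, map_smul, LinearMap.add_apply, LinearMap.smul_apply,
    inner_add_left, inner_add_right, real_inner_smul_left, real_inner_smul_right]
  linear_combination (2*c^2*s)*d1 + (c^2*s)*d2 + (2*c*s^2)*d3 + (c*s^2)*d4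

set_option maxHeartbeats 1000000 in
/-- Lemma 4.1: if `K ≠ 0`, the function `f(u) = ⟨K(u,u),u⟩` attains a positive maximum
`λ₁` at some unit vector `e₁`, and there is an orthonormal basis `{e₁,…,e_n}`
diagonalizing `K(e₁,·)`, whose eigenvalues `λ_i` satisfy the stated relations. -/
theorem stmt_0 {V : Type*} [NormedAddCommGroup V] [InnerProductSpace ℝ V]
    (n : ℕ) (hn : finrank ℝ V = n) (hn2 : 2 ≤ n)
    (ε : ℝ) (hε : ε = 1 ∨ ε = -1)
    (K : V →ₗ[ℝ] V →ₗ[ℝ] V)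
    (hKsymm : ∀ X Y : V, K X Y = K Y X)
    (hKcub : ∀ X Y Z : V, ⟪K X Y, Z⟫ = ⟪K X Z, Y⟫)
    (hpar : ∀ X Y Z U : V,
      Rc ε K X Y (K Z U) = K (Rc ε K X Y Z) U + K Z (Rc ε K X Y U))
    (hK0 : K ≠ 0) :
    ∃ (e1 : V) (lam1 : ℝ), ‖e1‖ = 1 ∧ lam1 = ⟪K e1 e1, e1⟫ ∧ 0 < lam1 ∧
      (∀ u : V, ‖u‖ = 1 → ⟪K u u, u⟫ ≤ lam1) ∧
      ∃ (b : OrthonormalBasis (Fin n) ℝ V) (lam : Fin n → ℝ),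
        b ⟨0, by omega⟩ = e1 ∧ lam ⟨0, by omega⟩ = lam1 ∧
        (∀ i : Fin n, K e1 (b i) = lam i • b i) ∧
        ∀ i : Fin n, i ≠ ⟨0, by omega⟩ →
          (lam1 - 2 * lam i) * (ε - lam1 * lam i + lam i ^ 2) = 0 ∧
          (lam1 = 2 * lam i → ⟪K (b i) (b i), b i⟫ = 0) ∧
          (lam1 ≠ 2 * lam i →
            0 < lam1 ^ 2 - 4 * ε ∧
            lam i = (lam1 - Real.sqrt (lam1 ^ 2 - 4 * ε)) / 2) := by
  obtain ⟨m, rfl⟩ : ∃ m, n = m + 1 := ⟨n - 1, by omega⟩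
  have hfd : FiniteDimensional ℝ V := FiniteDimensional.of_finrank_pos (by omega)
  have hnt : Nontrivial V := finrank_pos_iff (R := ℝ).mp (by omega)
  -- continuity of the cubic form
  obtain ⟨K', hK'⟩ : ∃ K' : V →ₗ[ℝ] (V →L[ℝ] V), ∀ x y : V, K' x y = K x y :=
    ⟨(LinearMap.toContinuousLinearMap.toLinearMap).comp K, fun x y => rfl⟩
  have hfc : Continuous (fun u : V => ⟪K u u, u⟫) := by
    have h1 : Continuous fun u : V => (K' u) u :=
      isBoundedBilinearMap_apply.continuous.comp
        (K'.continuous_of_finiteDimensional.prodMk continuous_id)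
    have h2 : (fun u : V => ⟪K u u, u⟫) = fun u : V => ⟪(K' u) u, u⟫ := by
      funext u; rw [hK']
    rw [h2]
    exact h1.inner continuous_id
  -- maximum on the sphere
  obtain ⟨e1, he1m, hmaxOn⟩ := (isCompact_sphere (0:V) 1).exists_isMaxOn
    (NormedSpace.sphere_nonempty.mpr zero_le_one) hfc.continuousOn
  have he1 : ‖e1‖ = 1 := by simpa using he1m
  obtain ⟨lam1, hlam1⟩ : ∃ l : ℝ, l = ⟪K e1 e1, e1⟫ := ⟨_, rfl⟩
  rw [isMaxOn_iff] at hmaxOn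
  have hmax : ∀ u : V, ‖u‖ = 1 → ⟪K u u, u⟫ ≤ lam1 := by
    intro u hu
    rw [hlam1]
    exact hmaxOn u (by simpa using hu)
  have he1inner : ⟪e1, e1⟫ = 1 := by
    rw [real_inner_self_eq_norm_mul_norm, he1]; norm_num
  have hodd : ∀ u : V, ⟪K (-u) (-u), -u⟫ = -⟪K u u, u⟫ := by
    intro u
    simp [map_neg, LinearMap.neg_apply, inner_neg_left, inner_neg_right]
  have hcube3 : ∀ (t : ℝ) (x : V), ⟪K (t•x) (t•x), t•x⟫ = t^3 * ⟪K x x, x⟫ := by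
    intro t x
    simp only [map_smul, LinearMap.smul_apply, real_inner_smul_left, real_inner_smul_right]
    ring
  have hge : 0 ≤ lam1 := by
    have h1 := hmax (-e1) (by simpa using he1)
    rw [hodd] at h1
    have h2 := hmax e1 he1
    linarith
  have hpos : 0 < lam1 := by
    rcases hge.lt_or_eq with h | h
    · exact h
    · exfalso
      apply hK0
      apply aux_K_zero K hKsymm hKcub
      intro x
      rcases eq_or_ne x 0 with rfl | hx
      · simp
      · have hxu : ‖‖x‖⁻¹ • x‖ = 1 := norm_smul_inv_norm hx
        have h1 := hmax _ hxu
        rw [hcube3] at h1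
        have h2 := hmax (-(‖x‖⁻¹ • x)) (by rwa [norm_neg])
        rw [hodd, hcube3] at h2
        have ht : (0:ℝ) < (‖x‖⁻¹)^3 := by
          have : (0:ℝ) < ‖x‖⁻¹ := by
            rw [inv_pos]; exact norm_pos_iff.mpr hx
          positivity
        have h3 : (‖x‖⁻¹)^3 * ⟪K x x, x⟫ = 0 := by
          rw [← h] at h1 h2; linarith
        exact (mul_eq_zero.mp h3).resolve_left (ne_of_gt ht)
  -- the key inequality for unit vectors orthogonal to e1
  have hkey : ∀ v : V, ‖v‖ = 1 → ⟪e1, v⟫ = 0 → ∀ c s : ℝ, c^2 + s^2 = 1 →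
      c^3*lam1 + 3*c^2*s*⟪K e1 e1, v⟫ + 3*c*s^2*⟪K e1 v, v⟫ + s^3*⟪K v v, v⟫ ≤ lam1 := by
    intro v hv ho c s h
    have h1 := hmax _ (aux_norm_one e1 v he1 hv ho c s h)
    rw [aux_expand K hKsymm hKcub e1 v c s, ← hlam1] at h1
    exact h1
  -- first-order condition
  have hb0 : ∀ v : V, ‖v‖ = 1 → ⟪e1, v⟫ = 0 → ⟪K e1 e1, v⟫ = 0 := by
    intro v hv ho
    have key := hkey v hv ho
    have hle1 : ⟪K e1 e1, v⟫ ≤ 0 := aux_b_nonpos lam1 _ _ _ hge key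
    have hle2 : -⟪K e1 e1, v⟫ ≤ 0 := by
      apply aux_b_nonpos lam1 (⟪K e1 v, v⟫) _ (-⟪K v v, v⟫) hge
      intro c s h
      have h1 := key c (-s) (by rw [neg_pow]; simpa using h)
      nlinarith [h1]
    linarith
  have hKe1e1 : K e1 e1 = lam1 • e1 := by
    obtain ⟨d, hd⟩ : ∃ d : V, d = K e1 e1 - lam1 • e1 := ⟨_, rfl⟩
    have hde : ⟪e1, d⟫ = 0 := by
      have h9 : ⟪e1, K e1 e1⟫ = lam1 := by rw [real_inner_comm]; exact hlam1.symm
      rw [hd, inner_sub_right, real_inner_smul_right, h9, he1inner]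
      ring
    have hd0 : d = 0 := by
      by_contra hd0
      have hnd : (0:ℝ) < ‖d‖ := norm_pos_iff.mpr hd0
      have hu : ‖‖d‖⁻¹ • d‖ = 1 := norm_smul_inv_norm hd0
      have hou : ⟪e1, ‖d‖⁻¹ • d⟫ = 0 := by
        rw [real_inner_smul_right, hde, mul_zero]
      have h1 := hb0 _ hu hou
      rw [real_inner_smul_right] at h1
      have h2 : ⟪K e1 e1, d⟫ = ‖d‖^2 := by
        have hKd : K e1 e1 = d + lam1 • e1 := by rw [hd]; abel
        rw [hKd, inner_add_left, real_inner_smul_left, hde, real_inner_self_eq_norm_sq]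
        ring
      rw [h2] at h1
      exact absurd h1 (ne_of_gt (mul_pos (by positivity) (by positivity)))
    rw [hd] at hd0
    exact sub_eq_zero.mp hd0
  -- the orthogonal complement of e1
  have he10 : e1 ≠ 0 := by intro h; rw [h] at he1; simp at he1
  have hmemW : ∀ w : V, w ∈ (ℝ ∙ e1)ᗮ ↔ ⟪e1, w⟫ = 0 := fun w =>
    Submodule.mem_orthogonal_singleton_iff_inner_right
  have hAW : ∀ w ∈ (ℝ ∙ e1)ᗮ, K e1 w ∈ (ℝ ∙ e1)ᗮ := by
    intro w hw
    rw [hmemW] at hw ⊢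
    calc ⟪e1, K e1 w⟫ = ⟪K e1 w, e1⟫ := real_inner_comm _ _
    _ = ⟪K e1 e1, w⟫ := hKcub e1 w e1
    _ = lam1 * ⟪e1, w⟫ := by rw [hKe1e1, real_inner_smul_left]
    _ = 0 := by rw [hw, mul_zero]
  have hrW : finrank ℝ ((ℝ ∙ e1)ᗮ : Submodule ℝ V) = m := by
    have h1 := Submodule.finrank_add_finrank_orthogonal (K := (ℝ ∙ e1 : Submodule ℝ V))
    have h2 : finrank ℝ (ℝ ∙ e1 : Submodule ℝ V) = 1 := finrank_span_singleton he10
    rw [h2, hn] at h1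
    omega
  have hBsym : ((K e1).restrict hAW).IsSymmetric := by
    intro w w'
    show ⟪((K e1).restrict hAW w : V), (w' : V)⟫ = ⟪(w : V), ((K e1).restrict hAW w' : V)⟫
    rw [LinearMap.restrict_coe_apply, LinearMap.restrict_coe_apply,
      hKcub e1 (w : V) (w' : V), real_inner_comm]
  obtain ⟨cb, ev, hcb⟩ : ∃ (cb : OrthonormalBasis (Fin m) ℝ ((ℝ ∙ e1)ᗮ : Submodule ℝ V))
      (ev : Fin m → ℝ), ∀ j, K e1 (cb j : V) = ev j • (cb j : V) := by
    refine ⟨hBsym.eigenvectorBasis hrW, hBsym.eigenvalues hrW, fun j => ?_⟩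
    have h1 := hBsym.apply_eigenvectorBasis hrW j
    have h2 : ((K e1).restrict hAW (hBsym.eigenvectorBasis hrW j) : V)
        = K e1 (hBsym.eigenvectorBasis hrW j : V) := LinearMap.restrict_coe_apply _ _ _
    rw [h1] at h2
    simpa using h2.symm
  -- assemble the orthonormal basis
  have hcbW : ∀ j, ⟪e1, (cb j : V)⟫ = 0 := fun j => (hmemW _).mp (cb j).2
  have hcbn : ∀ j, ‖(cb j : V)‖ = 1 := fun j => cb.orthonormal.1 j
  have hcbvv : ∀ j, ⟪(cb j : V), (cb j : V)⟫ = 1 := by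
    intro j
    rw [real_inner_self_eq_norm_mul_norm, hcbn]; norm_num
  have horth : Orthonormal ℝ (Fin.cons e1 (fun j => (cb j : V)) : Fin (m+1) → V) := by
    rw [orthonormal_iff_ite]
    intro i j
    induction i using Fin.cases with
    | zero =>
      induction j using Fin.cases with
      | zero => simpa using he1inner
      | succ j' =>
        simp only [Fin.cons_zero, Fin.cons_succ]
        rw [hcbW j', if_neg (Fin.succ_ne_zero j').symm]
    | succ i' =>
      induction j using Fin.cases with
      | zero =>
        simp only [Fin.cons_zero, Fin.cons_succ]
        rw [real_inner_comm, hcbW i', if_neg (Fin.succ_ne_zero i')]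
      | succ j' =>
        simp only [Fin.cons_succ]
        have := orthonormal_iff_ite.mp cb.orthonormal i' j'
        rw [show (⟪(cb i' : V), (cb j' : V)⟫ : ℝ) = ⟪cb i', cb j'⟫ from rfl, this]
        simp [Fin.succ_inj]
  have hcard : Fintype.card (Fin (m+1)) = finrank ℝ V := by simp [hn]
  have hspan := LinearIndependent.span_eq_top_of_card_eq_finrank
    horth.linearIndependent hcard
  refine ⟨e1, lam1, he1, hlam1, hpos, hmax,
    OrthonormalBasis.mk horth hspan.ge, Fin.cons lam1 ev, ?_, ?_, ?_, ?_⟩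
  · have hi0 : (⟨0, by omega⟩ : Fin (m+1)) = 0 := by ext; simp
    rw [hi0, OrthonormalBasis.coe_mk, Fin.cons_zero]
  · have hi0 : (⟨0, by omega⟩ : Fin (m+1)) = 0 := by ext; simp
    rw [hi0, Fin.cons_zero]
  · intro i
    induction i using Fin.cases with
    | zero =>
      rw [OrthonormalBasis.coe_mk, Fin.cons_zero, Fin.cons_zero]
      exact hKe1e1
    | succ j =>
      rw [OrthonormalBasis.coe_mk, Fin.cons_succ, Fin.cons_succ]
      exact hcb j
  · intro i hi
    have hi0 : (⟨0, by omega⟩ : Fin (m+1)) = 0 := by ext; simp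
    rw [hi0] at hi
    obtain ⟨j, rfl⟩ := Fin.eq_succ_of_ne_zero hi
    rw [OrthonormalBasis.coe_mk, Fin.cons_succ, Fin.cons_succ]
    obtain ⟨l, hl⟩ : ∃ l : ℝ, l = ev j := ⟨_, rfl⟩
    rw [← hl]
    obtain ⟨v, hv⟩ : ∃ v : V, v = (cb j : V) := ⟨_, rfl⟩
    rw [← hv]
    have hv1 : ‖v‖ = 1 := hv ▸ hcbn j
    have hov : ⟪e1, v⟫ = 0 := hv ▸ hcbW j
    have hvv : ⟪v, v⟫ = 1 := hv ▸ hcbvv j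
    have heigv : K e1 v = l • v := by rw [hv, hl]; exact hcb j
    have e_b : ⟪K e1 e1, v⟫ = 0 := by
      rw [hKe1e1, real_inner_smul_left, hov, mul_zero]
    have e_a : ⟪K e1 v, v⟫ = l := by
      rw [heigv, real_inner_smul_left, hvv, mul_one]
    have key0 : ∀ c s : ℝ, c^2 + s^2 = 1 →
        c^3*lam1 + 3*c*s^2*l + s^3*⟪K v v, v⟫ ≤ lam1 := by
      intro c s h
      have h1 := hkey v hv1 hov c s h
      rw [e_b, e_a] at h1
      linarith
    have hle : l ≤ lam1/2 := aux_a_le lam1 _ _ hge key0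
    -- parallelism computation
    obtain ⟨t, htdef⟩ : ∃ t : ℝ, t = lam1*l - l^2 - ε := ⟨_, rfl⟩
    have hve1 : ⟪v, e1⟫ = 0 := by rw [real_inner_comm]; exact hov
    have hRz : Rc ε K e1 v e1 = t • v := by
      show ε • (⟪v, e1⟫ • e1 - ⟪e1, e1⟫ • v) - K e1 (K v e1) + K v (K e1 e1) = t • v
      rw [hve1, he1inner, hKsymm v e1, heigv, map_smul, heigv, hKe1e1, map_smul,
        hKsymm v e1, heigv, htdef]
      module
    have hRcsmul : ∀ (X Y Z : V) (r : ℝ), Rc ε K X Y (r • Z) = r • Rc ε K X Y Z := by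
      intro X Y Z r
      show ε • (⟪Y, r • Z⟫ • X - ⟪X, r • Z⟫ • Y) - K X (K Y (r • Z)) + K Y (K X (r • Z))
        = r • (ε • (⟪Y, Z⟫ • X - ⟪X, Z⟫ • Y) - K X (K Y Z) + K Y (K X Z))
      rw [real_inner_smul_right, real_inner_smul_right, map_smul, map_smul, map_smul, map_smul]
      module
    have heq := hpar e1 v e1 e1
    rw [hKe1e1, hRcsmul, hRz, map_smul, LinearMap.smul_apply, map_smul,
      hKsymm v e1, heigv] at heq
    have hsc : lam1 * t = 2*t*l := by
      have h1 := congrArg (fun w : V => (⟪w, v⟫ : ℝ)) heq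
      simp only [real_inner_smul_left, inner_add_left] at h1
      rw [hvv] at h1
      linear_combination h1
    have hfact : (lam1 - 2*l) * (ε - lam1*l + l^2) = 0 := by
      rw [htdef] at hsc
      linear_combination -hsc
    refine ⟨hfact, ?_, ?_⟩
    · intro h2l
      obtain ⟨mu, hmu⟩ : ∃ mu : ℝ, mu = ⟪K v v, v⟫ := ⟨_, rfl⟩
      rw [← hmu]
      have hl2 : l = lam1/2 := by linarith [h2l]
      have key1 : ∀ c s : ℝ, c^2 + s^2 = 1 →
          c^3*lam1 + 3*c*s^2*(lam1/2) + s^3*mu ≤ lam1 := by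
        intro c s h
        have h1 := key0 c s h
        rw [hl2, ← hmu] at h1
        linarith
      have hmu1 : mu ≤ 0 := aux_mu_nonpos lam1 mu hpos key1
      have hmu2 : -mu ≤ 0 := by
        apply aux_mu_nonpos lam1 (-mu) hpos
        intro c s h
        have hcss : c^2 + (-s)^2 = 1 := by rw [neg_sq]; exact h
        have h1 := key1 c (-s) hcss
        linarith [h1]
      linarith
    · intro hne
      have htne : lam1 - 2*l ≠ 0 := sub_ne_zero.mpr hne
      have ht0 : ε - lam1*l + l^2 = 0 := (mul_eq_zero.mp hfact).resolve_left htne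
      have hdisc : lam1^2 - 4*ε = (lam1 - 2*l)^2 := by linear_combination (-4)*ht0
      constructor
      · rw [hdisc]
        exact lt_of_le_of_ne (sq_nonneg _) (Ne.symm (pow_ne_zero 2 htne))
      · rw [hdisc, Real.sqrt_sq (by linarith : (0:ℝ) ≤ lam1 - 2*l)]
        ring


end
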